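/- The explicit function g(u) = √((C - 2H + √(C² - 4 - 4HC)·sin(2√(1+H²)u))/(2(1+H²))) satisfies the first-order ODE (g')² + g⁻² + (1+H²)g² + 2H = C, provided H ≥ 0 and C > 2(H + √(1+H²)). -/

import Mathlib

/-- The explicit function
`g(u) = √((C - 2H + √(C²-4-4HC)·sin(2√(1+H²)u))/(2(1+H²)))` satisfies
`(g')² + g⁻² + (1+H²)g² + 2H = C`, provided `H ≥ 0` and `C > 2(H+√(1+H²))`. -/
theorem stmt8 (H C : ℝ) (hH : 0 ≤ H) (hC : C > 2 * (H + Real.sqrt (1 + H ^ 2))) :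
    let g : ℝ → ℝ := fun u => Real.sqrt
      ((C - 2 * H + Real.sqrt (C ^ 2 - 4 - 4 * H * C) *
        Real.sin (2 * Real.sqrt (1 + H ^ 2) * u)) / (2 * (1 + H ^ 2)))
    ∀ u : ℝ, (deriv g u) ^ 2 + ((g u) ^ 2)⁻¹ + (1 + H ^ 2) * (g u) ^ 2 + 2 * H = C := by
  intro g u
  set b : ℝ := Real.sqrt (1 + H ^ 2) with hb
  have hb2pos : (0:ℝ) < 1 + H ^ 2 := by positivity
  have hbpos : 0 < b := Real.sqrt_pos.mpr hb2pos
  have hbsq : b ^ 2 = 1 + H ^ 2 := Real.sq_sqrt hb2pos.le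
  set D : ℝ := Real.sqrt (C ^ 2 - 4 - 4 * H * C) with hD
  have hA : 2 * b < C - 2 * H := by linarith
  have harg : 0 ≤ C ^ 2 - 4 - 4 * H * C := by nlinarith [sq_nonneg (C - 2*H - 2*b)]
  have hDsq : D ^ 2 = C ^ 2 - 4 - 4 * H * C := Real.sq_sqrt harg
  have hDnn : 0 ≤ D := Real.sqrt_nonneg _
  have hDlt : D < C - 2 * H := by
    nlinarith [hbsq, hbpos, hA, hDsq, hDnn]
  set f : ℝ → ℝ := fun u => (C - 2 * H + D * Real.sin (2 * b * u)) / (2 * (1 + H ^ 2))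
    with hf
  have hfpos : 0 < f u := by
    have hs := Real.neg_one_le_sin (2 * b * u)
    have : C - 2 * H + D * Real.sin (2 * b * u) > 0 := by nlinarith
    positivity
  have hfd : HasDerivAt f (D * (Real.cos (2 * b * u) * (2 * b)) / (2 * (1 + H ^ 2))) u := by
    have h1 : HasDerivAt (fun u : ℝ => 2 * b * u) (2 * b) u := by
      simpa using (hasDerivAt_id u).const_mul (2 * b)
    have h2 := (Real.hasDerivAt_sin (2 * b * u)).comp u h1
    have h3 := ((h2.const_mul D).const_add (C - 2 * H)).div_const (2 * (1 + H ^ 2))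
    exact h3
  have hgd : HasDerivAt g ((D * (Real.cos (2 * b * u) * (2 * b)) / (2 * (1 + H ^ 2))) /
      (2 * Real.sqrt (f u))) u := hfd.sqrt hfpos.ne'
  have hderiv : deriv g u = (D * (Real.cos (2 * b * u) * (2 * b)) / (2 * (1 + H ^ 2))) /
      (2 * Real.sqrt (f u)) := hgd.deriv
  have hg2 : (g u) ^ 2 = f u := Real.sq_sqrt hfpos.le
  have hsqpos : 0 < Real.sqrt (f u) := Real.sqrt_pos.mpr hfpos
  have hsq2 : Real.sqrt (f u) ^ 2 = f u := Real.sq_sqrt hfpos.le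
  have hsc : Real.sin (2 * b * u) ^ 2 + Real.cos (2 * b * u) ^ 2 = 1 :=
    Real.sin_sq_add_cos_sq _
  rw [hderiv, hg2]
  have hfu : f u = (C - 2 * H + D * Real.sin (2 * b * u)) / (2 * (1 + H ^ 2)) := rfl
  have hDsq' : D ^ 2 = (C - 2*H) ^ 2 - 4 * (1 + H ^ 2) := by rw [hDsq]; ring
  have hcb : (Real.cos (2*b*u) * (2*b)) ^ 2 = Real.cos (2*b*u) ^ 2 * (4*(1+H^2)) := by
    rw [mul_pow, show (2*b)^2 = 4*b^2 by ring, hbsq]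
  have hden : (2 * Real.sqrt (f u)) ^ 2 = 4 * f u := by rw [mul_pow, hsq2]; ring
  have hPpos : 0 < C - 2*H + D * Real.sin (2*b*u) := by
    have hs := Real.neg_one_le_sin (2 * b * u)
    nlinarith
  rw [div_pow, div_pow, hden, mul_pow, hcb, hfu]
  set s' := Real.sin (2*b*u)
  set c' := Real.cos (2*b*u)
  field_simp
  have hc2 : c' ^ 2 = 1 - s' ^ 2 := by linarith
  rw [hc2]
  have hP' : C - H * 2 + D * s' ≠ 0 := by linarith
  rw [div_add' _ _ _ hP', div_eq_iff hP']
  linear_combination hDsq'
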